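/- For ε > 0 and h > 0, the only zero of χ(z) = εz + 1 − e^{−zh} with nonnegative real part is z = 0. -/

import Mathlib

theorem chi_zero_nonneg_re (ε h : ℝ) (hε : 0 < ε) (hh : 0 < h) :
    ∀ z : ℂ, (ε : ℂ) * z + 1 - Complex.exp (-z * h) = 0 → 0 ≤ z.re → z = 0 := by
  intro z hz hre
  have hz' : Complex.exp (-z * h) = (ε : ℂ) * z + 1 := by linear_combination -hz
  have habs : Real.exp ((-z * (h : ℂ)).re) = ‖(ε : ℂ) * z + 1‖ := by
    rw [← Complex.norm_exp, hz']
  have hre' : ((-z) * (h : ℂ)).re = -(z.re * h) := by simp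
  have hA1 : Real.exp (-(z.re * h)) ≤ 1 := by
    apply Real.exp_le_one_iff.mpr
    nlinarith
  have hsq : Real.exp (-(z.re * h)) ^ 2 = (ε * z.re + 1) ^ 2 + (ε * z.im) ^ 2 := by
    rw [← hre', habs, Complex.sq_norm]
    simp [Complex.normSq_apply]
    ring
  have hApos : 0 < Real.exp (-(z.re * h)) := Real.exp_pos _
  have hA2 : Real.exp (-(z.re * h)) ^ 2 ≤ 1 := by nlinarith
  have hx : z.re = 0 := by nlinarith [sq_nonneg (ε * z.im), mul_nonneg hε.le hre]
  have hy : z.im = 0 := by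
    simp [hx] at hsq
    exact hsq.resolve_left hε.ne'
  exact Complex.ext hx hy
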